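/- arXiv:2602.06836 — 3 statements merged into one kernel-verified Lean document; each statement's English description precedes it below -/
import Mathlib

section
/- Fix integers D ≥ 1 and M ≥ 2, a symmetric positive semidefinite real D×D matrix C, a vector a ∈ ℝ^D, and positive reals β_A, β_I, β_D. Let A = 2β_I C − β_D I, assume A is invertible, let B = (2β_I C + (M−1)β_D I)^{-1}, set s_0 = β_A 𝟙^T B a, s_1 = 𝟙^T B 𝟙, s_2 = 𝟙^T B A^{-1} 𝟙, and α = 𝟙^T A^{-1} 𝟙 = s_1 + Mβ_D s_2. Suppose vectors w_1,…,w_M ∈ ℝ^D with 𝟙^T w_m = 1 for every m and reals λ_1,…,λ_M satisfy, for every m, β_A a − 2β_I C w_m − β_D Σ_{j≠m} w_j = λ_m 𝟙. Then for every m, −α λ_m + β_D s_2 Σ_{i=1}^M λ_i = 1 − s_0; and if α ≠ 0, then all the multipliers are equal: λ_1 = ⋯ = λ_M = λ* where λ* = (β_A 𝟙^T B a − 1)/(𝟙^T B 𝟙). -/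
open Matrix Finset

/-- Normalizing the stationarity equations: with `A = 2β_I C − β_D I` invertible,
`B = (2β_I C + (M−1)β_D I)⁻¹`, `s₀ = β_A 𝟙ᵀBa`, `s₁ = 𝟙ᵀB𝟙`, `s₂ = 𝟙ᵀBA⁻¹𝟙`,
`α = 𝟙ᵀA⁻¹𝟙`, the multipliers satisfy `−αλ_m + β_D s₂ ∑ᵢ λᵢ = 1 − s₀` (and
`α = s₁ + Mβ_D s₂`), and if `α ≠ 0` they are all equal to
`λ* = (β_A 𝟙ᵀBa − 1)/(𝟙ᵀB𝟙)`. -/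
theorem stmt_8 (D M : ℕ) (hD : 0 < D) (hM : 2 ≤ M)
    (C : Matrix (Fin D) (Fin D) ℝ) (hC : C.PosSemidef)
    (a : Fin D → ℝ) (βA βI βD : ℝ) (hβA : 0 < βA) (hβI : 0 < βI) (hβD : 0 < βD)
    (hAinv : IsUnit ((2 * βI) • C - βD • (1 : Matrix (Fin D) (Fin D) ℝ)).det)
    (w : Fin M → Fin D → ℝ) (lam : Fin M → ℝ)
    (hsum : ∀ m, ∑ i, w m i = 1)
    (hstat : ∀ m, βA • a - (2 * βI) • (C *ᵥ w m)
        - βD • ∑ j ∈ Finset.univ.erase m, w j = fun _ => lam m) :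
    let ones : Fin D → ℝ := fun _ => 1
    let A := (2 * βI) • C - βD • (1 : Matrix (Fin D) (Fin D) ℝ)
    let B := ((2 * βI) • C + (((M : ℝ) - 1) * βD) • (1 : Matrix (Fin D) (Fin D) ℝ))⁻¹
    let s0 := βA * (ones ⬝ᵥ B *ᵥ a)
    let s1 := ones ⬝ᵥ B *ᵥ ones
    let s2 := ones ⬝ᵥ B *ᵥ (A⁻¹ *ᵥ ones)
    let α := ones ⬝ᵥ A⁻¹ *ᵥ ones
    (α = s1 + (M : ℝ) * βD * s2) ∧
    (∀ m, -α * lam m + βD * s2 * ∑ i, lam i = 1 - s0) ∧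
    (α ≠ 0 → ∀ m, lam m = (βA * (ones ⬝ᵥ B *ᵥ a) - 1) / (ones ⬝ᵥ B *ᵥ ones)) := by
  intro ones A B s0 s1 s2 α
  set Binv : Matrix (Fin D) (Fin D) ℝ :=
    (2 * βI) • C + (((M : ℝ) - 1) * βD) • (1 : Matrix (Fin D) (Fin D) ℝ) with hBinvdef
  have hBinvA : Binv = A + ((M : ℝ) * βD) • (1 : Matrix (Fin D) (Fin D) ℝ) := by
    show Binv = ((2 * βI) • C - βD • 1) + ((M : ℝ) * βD) • 1
    rw [hBinvdef]; module
  -- Binv is positive definite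
  have hBpd : Binv.PosDef := by
    refine Matrix.PosDef.of_dotProduct_mulVec_pos ?_ ?_
    · show Binvᴴ = Binv
      have hCt : Cᵀ = C := by have := hC.1.eq; simpa using this
      simp [hBinvdef, Matrix.conjTranspose_add, Matrix.conjTranspose_smul, hCt]
    · intro x hx
      have hM1 : (2 : ℝ) ≤ (M : ℝ) := by exact_mod_cast hM
      have hCx : 0 ≤ x ⬝ᵥ C *ᵥ x := by simpa using hC.dotProduct_mulVec_nonneg x
      have hxx : 0 < x ⬝ᵥ x := by
        simpa using dotProduct_star_self_pos_iff (v := x) |>.2 hx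
      have : star x ⬝ᵥ Binv *ᵥ x
          = (2 * βI) * (x ⬝ᵥ C *ᵥ x) + (((M : ℝ) - 1) * βD) * (x ⬝ᵥ x) := by
        simp [hBinvdef, Matrix.add_mulVec, Matrix.smul_mulVec, Matrix.one_mulVec,
          dotProduct_add, dotProduct_smul, smul_eq_mul, star_trivial]
      rw [this]
      nlinarith [mul_pos hβD hxx, mul_nonneg (mul_nonneg (by norm_num : (0:ℝ) ≤ 2) hβI.le) hCx]
  have hBunit : IsUnit Binv.det := hBpd.det_pos.ne'.isUnit
  have hBB : B * Binv = 1 := Matrix.nonsing_inv_mul Binv hBunit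
  have hBB' : Binv * B = 1 := Matrix.mul_nonsing_inv Binv hBunit
  have hA1 : A⁻¹ * A = 1 := Matrix.nonsing_inv_mul A hAinv
  have hA2 : A * A⁻¹ = 1 := Matrix.mul_nonsing_inv A hAinv
  have hcomm : A * Binv = Binv * A := by
    rw [hBinvA]; simp [mul_add, add_mul, mul_smul_comm, smul_mul_assoc]
  have hABcomm : A * B = B * A := by
    calc A * B = (B * Binv) * (A * B) := by rw [hBB, one_mul]
      _ = B * (Binv * A) * B := by simp only [mul_assoc]
      _ = B * (A * Binv) * B := by rw [hcomm]
      _ = (B * A) * (Binv * B) := by simp only [mul_assoc]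
      _ = B * A := by rw [hBB', mul_one]
  have hAinvB : A⁻¹ * B = B * A⁻¹ := by
    calc A⁻¹ * B = A⁻¹ * B * (A * A⁻¹) := by rw [hA2, mul_one]
      _ = A⁻¹ * (B * A) * A⁻¹ := by simp only [mul_assoc]
      _ = A⁻¹ * (A * B) * A⁻¹ := by rw [hABcomm]
      _ = (A⁻¹ * A) * (B * A⁻¹) := by simp only [mul_assoc]
      _ = B * A⁻¹ := by rw [hA1, one_mul]
  have hKey : A⁻¹ = B + ((M : ℝ) * βD) • (B * A⁻¹) := by
    calc A⁻¹ = (B * Binv) * A⁻¹ := by rw [hBB, one_mul]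
      _ = B * ((A + ((M : ℝ) * βD) • 1) * A⁻¹) := by rw [← hBinvA, mul_assoc]
      _ = B * (1 + ((M : ℝ) * βD) • A⁻¹) := by rw [add_mul, smul_mul_assoc, one_mul, hA2]
      _ = B + ((M : ℝ) * βD) • (B * A⁻¹) := by rw [mul_add, mul_one, mul_smul_comm]
  set T := ∑ i, lam i with hT
  set S : Fin D → ℝ := ∑ j, w j with hS
  have hstat' : ∀ m, A *ᵥ w m = βA • a - βD • S - lam m • ones := by
    intro m
    funext i
    have h := congrFun (hstat m) i
    simp only [Pi.sub_apply, Pi.smul_apply, smul_eq_mul, Finset.sum_apply,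
      Finset.sum_erase_eq_sub (Finset.mem_univ m)] at h
    show (A *ᵥ w m) i = (βA • a - βD • S - lam m • ones) i
    have hAv : (A *ᵥ w m) i = (2 * βI) * (C *ᵥ w m) i - βD * w m i := by
      show ((((2 * βI) • C - βD • (1 : Matrix (Fin D) (Fin D) ℝ))) *ᵥ w m) i = _
      simp [Matrix.sub_mulVec, Matrix.smul_mulVec, Matrix.one_mulVec]
    have hSi : S i = ∑ j, w j i := by simp [hS]
    simp only [Pi.sub_apply, Pi.smul_apply, smul_eq_mul, hAv, hSi]
    simp only [ones]
    linarith [h]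
  have mvsum : ∀ (N : Matrix (Fin D) (Fin D) ℝ), N *ᵥ S = ∑ m, N *ᵥ w m := by
    intro N
    rw [hS]
    have h := map_sum (Matrix.mulVecLin N) w Finset.univ
    simp only [Matrix.mulVecLin_apply] at h
    exact h
  have hScard : (Finset.univ : Finset (Fin M)).card = M := by simp
  have hSsum : A *ᵥ S = (M : ℝ) • (βA • a) - (M : ℝ) • (βD • S) - T • ones := by
    rw [mvsum]
    rw [Finset.sum_congr rfl (fun m _ => hstat' m)]
    rw [Finset.sum_sub_distrib, Finset.sum_sub_distrib, Finset.sum_const, Finset.sum_const,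
      hScard, ← Finset.sum_smul, ← hT]
    congr 1 <;> try rw [← Nat.cast_smul_eq_nsmul ℝ]
    congr 1 <;> rw [← Nat.cast_smul_eq_nsmul ℝ]
  have hBinvS : Binv *ᵥ S = ((M : ℝ) * βA) • a - T • ones := by
    rw [hBinvA, Matrix.add_mulVec, Matrix.smul_mulVec, Matrix.one_mulVec, hSsum]
    module
  have hSexpr : S = ((M : ℝ) * βA) • (B *ᵥ a) - T • (B *ᵥ ones) := by
    have : S = B *ᵥ (Binv *ᵥ S) := by
      rw [Matrix.mulVec_mulVec, hBB, Matrix.one_mulVec]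
    rw [this, hBinvS, Matrix.mulVec_sub, Matrix.mulVec_smul, Matrix.mulVec_smul]
  have honesdot : ∀ v : Fin D → ℝ, ones ⬝ᵥ v = ∑ i, v i := by
    intro v; simp [dotProduct, ones]
  have hexp : ∀ v : Fin D → ℝ,
      ones ⬝ᵥ A⁻¹ *ᵥ v = ones ⬝ᵥ B *ᵥ v + ((M : ℝ) * βD) * (ones ⬝ᵥ B *ᵥ (A⁻¹ *ᵥ v)) := by
    intro v
    conv_lhs => rw [hKey]
    rw [Matrix.add_mulVec, Matrix.smul_mulVec, dotProduct_add, dotProduct_smul,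
      ← Matrix.mulVec_mulVec, smul_eq_mul]
  have hswap : ∀ v : Fin D → ℝ,
      ones ⬝ᵥ A⁻¹ *ᵥ (B *ᵥ v) = ones ⬝ᵥ B *ᵥ (A⁻¹ *ᵥ v) := by
    intro v
    rw [Matrix.mulVec_mulVec, Matrix.mulVec_mulVec, hAinvB]
  have part1 : α = s1 + (M : ℝ) * βD * s2 := by
    have := hexp ones
    simpa [α, s1, s2, mul_assoc] using this
  have part2 : ∀ m, -α * lam m + βD * s2 * T = 1 - s0 := by
    intro m
    have hw : w m = A⁻¹ *ᵥ (βA • a - βD • S - lam m • ones) := by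
      rw [← hstat' m, Matrix.mulVec_mulVec, hA1, Matrix.one_mulVec]
    have h1 : ones ⬝ᵥ w m = 1 := by rw [honesdot]; exact hsum m
    rw [hw] at h1
    rw [Matrix.mulVec_sub, Matrix.mulVec_sub, Matrix.mulVec_smul, Matrix.mulVec_smul,
      Matrix.mulVec_smul, dotProduct_sub, dotProduct_sub, dotProduct_smul, dotProduct_smul,
      dotProduct_smul] at h1
    -- h1 : βA • (1ᵀA⁻¹a) - βD • (1ᵀA⁻¹S) - lam m • α = 1
    have hSdot : ones ⬝ᵥ A⁻¹ *ᵥ S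
        = ((M : ℝ) * βA) * (ones ⬝ᵥ B *ᵥ (A⁻¹ *ᵥ a)) - T * s2 := by
      rw [hSexpr, Matrix.mulVec_sub, Matrix.mulVec_smul, Matrix.mulVec_smul,
        dotProduct_sub, dotProduct_smul, dotProduct_smul, hswap, hswap]
      simp [smul_eq_mul, s2]
    have hadot := hexp a
    rw [hSdot, hadot] at h1
    simp only [smul_eq_mul] at h1
    simp only [s0, s2, α] at *
    ring_nf at h1 ⊢
    linarith [h1]
  have hBpdinv : B.PosDef := hBpd.inv
  have hones0 : ones ≠ 0 := by
    intro h
    have := congrFun h ⟨0, hD⟩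
    simp [ones] at this
  have hs1pos : 0 < s1 := by
    have := hBpdinv.dotProduct_mulVec_pos hones0
    simpa [s1, star_trivial] using this
  refine ⟨part1, fun m => part2 m, ?_⟩
  intro hα m
  have hTsum : -α * T + (M : ℝ) * (βD * s2 * T) = (M : ℝ) * (1 - s0) := by
    have h : ∑ m : Fin M, (-α * lam m + βD * s2 * T) = ∑ _m : Fin M, (1 - s0) :=
      Finset.sum_congr rfl fun m _ => part2 m
    simp only [Finset.sum_add_distrib, ← Finset.mul_sum, Finset.sum_const, hScard,
      nsmul_eq_mul, ← hT] at h
    linarith [h]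
  have hs1T : s1 * T = (M : ℝ) * (s0 - 1) := by
    linear_combination -hTsum - T * part1
  have hαm : α * lam m = βD * s2 * T + s0 - 1 := by linarith [part2 m]
  show lam m = (s0 - 1) / s1
  rw [eq_div_iff hs1pos.ne']
  have hcancel : α * (lam m * s1) = α * (s0 - 1) := by
    linear_combination s1 * hαm + βD * s2 * hs1T - (s0 - 1) * part1
  exact mul_left_cancel₀ hα hcancel
end

section
/- Fix integers D ≥ 1 and M ≥ 2, a symmetric positive semidefinite real D×D matrix C, a vector a ∈ ℝ^D, and positive reals β_A, β_I, β_D. Let B = (2β_I C + (M−1)β_D I)^{-1}, λ* = (β_A 𝟙^T B a − 1)/(𝟙^T B 𝟙), and w* = B(β_A a − λ* 𝟙). Then 𝟙^T w* = 1; and if moreover every coordinate of w* is strictly positive (so w* lies in the interior of the simplex Δ_D), the homogeneous profile in which every player m ∈ {1,…,M} plays w* is a Nash equilibrium of the game with utilities u_m(w_1,…,w_M) = β_A a⬝w_m − β_I w_m^T C w_m − β_D Σ_{j≠m} w_m⬝w_j, i.e., for every m and every w ∈ Δ_D, β_A a⬝w − β_I w^T C w − β_D (M−1) w⬝w* ≤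 β_A a⬝w* − β_I (w*)^T C w* − β_D (M−1) w*⬝w*. -/
open Matrix Finset

/-- With `B = (2β_I C + (M−1)β_D I)⁻¹`, `λ* = (β_A 𝟙ᵀBa − 1)/(𝟙ᵀB𝟙)` and
`w* = B(β_A a − λ* 𝟙)`, the vector `w*` sums to one, and if all of its coordinates are
strictly positive then the homogeneous profile in which every player plays `w*` is a
Nash equilibrium: no unilateral deviation within the simplex increases a player's
utility. -/
theorem stmt_9 (D M : ℕ) (hD : 0 < D) (hM : 2 ≤ M)
    (C : Matrix (Fin D) (Fin D) ℝ) (hC : C.PosSemidef)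
    (a : Fin D → ℝ) (βA βI βD : ℝ) (hβA : 0 < βA) (hβI : 0 < βI) (hβD : 0 < βD) :
    let ones : Fin D → ℝ := fun _ => 1
    let B := ((2 * βI) • C + (((M : ℝ) - 1) * βD) • (1 : Matrix (Fin D) (Fin D) ℝ))⁻¹
    let lamstar := (βA * (ones ⬝ᵥ B *ᵥ a) - 1) / (ones ⬝ᵥ B *ᵥ ones)
    let wstar := B *ᵥ (βA • a - lamstar • ones)
    (∑ i, wstar i = 1) ∧
    ((∀ i, 0 < wstar i) →
      ∀ w : Fin D → ℝ, (∀ i, 0 ≤ w i) → ∑ i, w i = 1 →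
        βA * (a ⬝ᵥ w) - βI * (w ⬝ᵥ C *ᵥ w) - βD * ((M : ℝ) - 1) * (w ⬝ᵥ wstar)
          ≤ βA * (a ⬝ᵥ wstar) - βI * (wstar ⬝ᵥ C *ᵥ wstar)
            - βD * ((M : ℝ) - 1) * (wstar ⬝ᵥ wstar)) := by
  intro ones B lamstar wstar
  have hM2 : (2:ℝ) ≤ (M:ℝ) := by exact_mod_cast hM
  set c : ℝ := ((M : ℝ) - 1) * βD with hc
  have hcpos : 0 < c := mul_pos (by linarith) hβD
  set A : Matrix (Fin D) (Fin D) ℝ :=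
    (2 * βI) • C + c • (1 : Matrix (Fin D) (Fin D) ℝ) with hAdef
  have hApos : A.PosDef := by
    refine Matrix.PosDef.of_dotProduct_mulVec_pos ?_ ?_
    · have h1 := hC.1
      simp only [Matrix.IsHermitian, hAdef, conjTranspose_add, conjTranspose_smul, h1.eq]
      simp [h1.eq]
    · intro x hx
      have h1 : 0 ≤ star x ⬝ᵥ C *ᵥ x := hC.dotProduct_mulVec_nonneg x
      have h2 : 0 < star x ⬝ᵥ x := dotProduct_star_self_pos_iff.mpr hx
      have : star x ⬝ᵥ A *ᵥ x
          = (2 * βI) * (star x ⬝ᵥ C *ᵥ x) + c * (star x ⬝ᵥ x) := by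
        rw [hAdef, add_mulVec, dotProduct_add, smul_mulVec, smul_mulVec,
          dotProduct_smul, one_mulVec]
        simp
      rw [this]
      have : 0 < c * (star x ⬝ᵥ x) := mul_pos hcpos h2
      nlinarith
  have hB : B = A⁻¹ := rfl
  have hBpos : B.PosDef := hB ▸ hApos.inv
  have hAB : A * B = 1 := by
    rw [hB]
    exact Matrix.mul_nonsing_inv A ((isUnit_iff_isUnit_det A).mp hApos.isUnit)
  -- sum identity via ones
  have honesne : ones ≠ 0 := by
    intro h
    have := congrFun h ⟨0, hD⟩
    simp [ones] at this
  have hdenom : 0 < ones ⬝ᵥ B *ᵥ ones := by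
    have := hBpos.dotProduct_mulVec_pos honesne
    simpa using this
  have hsum : ∀ v : Fin D → ℝ, ∑ i, v i = ones ⬝ᵥ v := by
    intro v; simp [dotProduct, ones]
  have hkey : ones ⬝ᵥ wstar = 1 := by
    have : ones ⬝ᵥ wstar
        = βA * (ones ⬝ᵥ B *ᵥ a) - lamstar * (ones ⬝ᵥ B *ᵥ ones) := by
      show ones ⬝ᵥ B *ᵥ (βA • a - lamstar • ones) = _
      rw [mulVec_sub, mulVec_smul, mulVec_smul, dotProduct_sub, dotProduct_smul,
        dotProduct_smul]
      simp [smul_eq_mul]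
    rw [this]
    show βA * (ones ⬝ᵥ B *ᵥ a) -
      ((βA * (ones ⬝ᵥ B *ᵥ a) - 1) / (ones ⬝ᵥ B *ᵥ ones)) * (ones ⬝ᵥ B *ᵥ ones) = 1
    field_simp
    ring
  constructor
  · rw [hsum]; exact hkey
  · intro _hpos w hw hw1
    -- key: A *ᵥ wstar = βA • a - lamstar • ones
    have hAw : A *ᵥ wstar = βA • a - lamstar • ones := by
      show A *ᵥ (B *ᵥ (βA • a - lamstar • ones)) = _
      rw [mulVec_mulVec, hAB, one_mulVec]
    set d : Fin D → ℝ := w - wstar with hd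
    have hdones : d ⬝ᵥ ones = 0 := by
      have h1 : w ⬝ᵥ ones = 1 := by
        rw [dotProduct_comm, ← hsum]; exact hw1
      have h2 : wstar ⬝ᵥ ones = 1 := by rw [dotProduct_comm]; exact hkey
      rw [hd, sub_dotProduct, h1, h2, sub_self]
    have hE : d ⬝ᵥ A *ᵥ wstar = βA * (d ⬝ᵥ a) - lamstar * (d ⬝ᵥ ones) := by
      rw [hAw, dotProduct_sub, dotProduct_smul, dotProduct_smul]
      simp [smul_eq_mul]
    have hEexp : d ⬝ᵥ A *ᵥ wstar
        = 2 * βI * (d ⬝ᵥ C *ᵥ wstar) + c * (d ⬝ᵥ wstar) := by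
      rw [hAdef, add_mulVec, dotProduct_add, smul_mulVec, smul_mulVec,
        dotProduct_smul, one_mulVec]
      simp [smul_eq_mul]
    -- symmetry of C
    have hsym : ∀ x y : Fin D → ℝ, x ⬝ᵥ C *ᵥ y = y ⬝ᵥ C *ᵥ x := by
      intro x y
      have h1 := hC.1
      rw [dotProduct_mulVec, ← mulVec_transpose, dotProduct_comm]
      congr 1
      rw [show Cᵀ = C from by simpa using h1.eq]
    have hgpos : 0 ≤ d ⬝ᵥ C *ᵥ d := by
      have := hC.dotProduct_mulVec_nonneg d
      simpa using this
    -- expansions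
    have hdC : d ⬝ᵥ C *ᵥ d
        = w ⬝ᵥ C *ᵥ w - 2 * (w ⬝ᵥ C *ᵥ wstar) + wstar ⬝ᵥ C *ᵥ wstar := by
      rw [hd, sub_dotProduct, mulVec_sub, dotProduct_sub, dotProduct_sub,
        hsym wstar w]
      ring
    have hdCw : d ⬝ᵥ C *ᵥ wstar = w ⬝ᵥ C *ᵥ wstar - wstar ⬝ᵥ C *ᵥ wstar := by
      rw [hd, sub_dotProduct]
    have hdw : d ⬝ᵥ wstar = w ⬝ᵥ wstar - wstar ⬝ᵥ wstar := by
      rw [hd, sub_dotProduct]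
    have hda : d ⬝ᵥ a = a ⬝ᵥ w - a ⬝ᵥ wstar := by
      rw [hd, sub_dotProduct, dotProduct_comm w a, dotProduct_comm wstar a]
    have hE2 : 2 * βI * (w ⬝ᵥ C *ᵥ wstar - wstar ⬝ᵥ C *ᵥ wstar)
        + c * (w ⬝ᵥ wstar - wstar ⬝ᵥ wstar)
        = βA * (a ⬝ᵥ w - a ⬝ᵥ wstar) := by
      have := hE
      rw [hEexp, hdones, hdCw, hdw, hda] at this
      linarith [this]
    have hfinal : 0 ≤ βI * (d ⬝ᵥ C *ᵥ d) := mul_nonneg hβI.le hgpos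
    rw [hdC] at hfinal
    have : βD * ((M : ℝ) - 1) = c := by rw [hc]; ring
    rw [this]
    nlinarith [hfinal, hE2]
end

section
/- Fix integers D ≥ 1 and M ≥ 2, a symmetric positive semidefinite real D×D matrix C, a vector a ∈ ℝ^D, and positive reals β_A, β_I, β_D. Assume A = 2β_I C − β_D I is invertible and α = 𝟙^T A^{-1} 𝟙 ≠ 0. Let B = (2β_I C + (M−1)β_D I)^{-1}, λ* = (β_A 𝟙^T B a − 1)/(𝟙^T B 𝟙), and w* = B(β_A a − λ* 𝟙). Then any interior Nash equilibrium is homogeneous and unique: if (w_1,…,w_M) is a Nash equilibrium of the game with utilities u_m(w_1,…,w_M) = β_A a⬝w_m − β_I w_m^T C w_m − β_D Σ_{j≠m} w_m⬝w_j in which every w_m lies in the interior of the simplex Δ_D (all coordinates strictly positive), then w_m = w* for every m. -/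
open Matrix Finset

private lemma symdot {D : ℕ} (C : Matrix (Fin D) (Fin D) ℝ) (h : Cᵀ = C) (x y : Fin D → ℝ) :
    x ⬝ᵥ C *ᵥ y = y ⬝ᵥ C *ᵥ x := by
  rw [Matrix.dotProduct_mulVec, ← Matrix.mulVec_transpose, h, dotProduct_comm]

private lemma dotdiff {D : ℕ} (i k : Fin D) (x : Fin D → ℝ) :
    (fun l => (if l = i then (1:ℝ) else 0) - if l = k then 1 else 0) ⬝ᵥ x = x i - x k := by
  simp [dotProduct, sub_mul, Finset.sum_sub_distrib, ite_mul]

/-- Uniqueness and homogeneity of the interior Nash equilibrium: assuming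
`A = 2β_I C − β_D I` is invertible and `α = 𝟙ᵀA⁻¹𝟙 ≠ 0`, any Nash equilibrium
`(w_1,…,w_M)` all of whose strategies lie in the interior of the simplex satisfies
`w_m = w* = B(β_A a − λ* 𝟙)` for every `m`, where
`B = (2β_I C + (M−1)β_D I)⁻¹` and `λ* = (β_A 𝟙ᵀBa − 1)/(𝟙ᵀB𝟙)`. -/
theorem stmt_10 (D M : ℕ) (hD : 0 < D) (hM : 2 ≤ M)
    (C : Matrix (Fin D) (Fin D) ℝ) (hC : C.PosSemidef)
    (a : Fin D → ℝ) (βA βI βD : ℝ) (hβA : 0 < βA) (hβI : 0 < βI) (hβD : 0 < βD)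
    (hAinv : IsUnit ((2 * βI) • C - βD • (1 : Matrix (Fin D) (Fin D) ℝ)).det)
    (hα : (fun _ => (1 : ℝ)) ⬝ᵥ
        ((2 * βI) • C - βD • (1 : Matrix (Fin D) (Fin D) ℝ))⁻¹ *ᵥ (fun _ => (1 : ℝ)) ≠ 0)
    (w : Fin M → Fin D → ℝ)
    (hint : ∀ m i, 0 < w m i) (hsum : ∀ m, ∑ i, w m i = 1)
    (hNE : ∀ m, ∀ v : Fin D → ℝ, (∀ i, 0 ≤ v i) → ∑ i, v i = 1 →
        βA * (a ⬝ᵥ v) - βI * (v ⬝ᵥ C *ᵥ v)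
            - βD * ∑ j ∈ Finset.univ.erase m, v ⬝ᵥ w j
          ≤ βA * (a ⬝ᵥ w m) - βI * (w m ⬝ᵥ C *ᵥ w m)
            - βD * ∑ j ∈ Finset.univ.erase m, w m ⬝ᵥ w j) :
    let ones : Fin D → ℝ := fun _ => 1
    let B := ((2 * βI) • C + (((M : ℝ) - 1) * βD) • (1 : Matrix (Fin D) (Fin D) ℝ))⁻¹
    let lamstar := (βA * (ones ⬝ᵥ B *ᵥ a) - 1) / (ones ⬝ᵥ B *ᵥ ones)
    let wstar := B *ᵥ (βA • a - lamstar • ones)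
    ∀ m, w m = wstar := by
  intro ones B lamstar wstar
  have hCsymm : Cᵀ = C := hC.1
  -- total field
  set S : Fin D → ℝ := fun i => ∑ j, w j i with hS
  -- partial sums
  have hserase : ∀ (m : Fin M) (i : Fin D),
      (∑ j ∈ Finset.univ.erase m, w j i) = S i - w m i := by
    intro m i
    show (∑ j ∈ Finset.univ.erase m, w j i) = (∑ j, w j i) - w m i
    rw [← Finset.sum_erase_add _ _ (Finset.mem_univ m)]
    ring
  -- the "gradient" of player m's utility
  set F : Fin M → Fin D → ℝ :=
    fun m i => βA * a i - 2 * βI * (C *ᵥ w m) i - βD * (S i - w m i) with hF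
  -- Step 1: first-order condition: F m is constant in i
  have hgrad : ∀ m i k, F m i ≤ F m k := by
    intro m i k
    by_cases hik : i = k
    · subst hik; exact le_rfl
    set d : Fin D → ℝ := fun l => (if l = i then (1:ℝ) else 0) - if l = k then 1 else 0 with hd
    set s : Fin D → ℝ := fun l => S l - w m l with hs
    have hds : ∀ x : Fin D → ℝ, d ⬝ᵥ x = x i - x k := by
      intro x
      show (fun l => (if l = i then (1:ℝ) else 0) - if l = k then 1 else 0) ⬝ᵥ x = x i - x k
      exact dotdiff i k x
    set g : ℝ := βA * (a ⬝ᵥ d) - 2 * βI * (d ⬝ᵥ C *ᵥ w m) - βD * (d ⬝ᵥ s) with hg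
    set q : ℝ := d ⬝ᵥ C *ᵥ d with hq
    have hq0 : 0 ≤ q := by
      have := hC.dotProduct_mulVec_nonneg d
      simpa using this
    have key : ∀ t : ℝ, 0 ≤ t → t ≤ w m k → t * g ≤ βI * q * t ^ 2 := by
      intro t ht0 htk
      set v : Fin D → ℝ := fun l => w m l + t * d l with hv
      have hv0 : ∀ l, 0 ≤ v l := by
        intro l
        show 0 ≤ w m l + t * ((if l = i then (1:ℝ) else 0) - if l = k then 1 else 0)
        by_cases hl : l = i
        · rw [hl, if_pos rfl, if_neg hik]
          nlinarith [hint m i]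
        · by_cases hl' : l = k
          · rw [hl', if_neg (fun h => hik h.symm), if_pos rfl]
            nlinarith [hint m k]
          · rw [if_neg hl, if_neg hl']
            nlinarith [hint m l]
      have hv1 : ∑ l, v l = 1 := by
        show (∑ l, (w m l + t * ((if l = i then (1:ℝ) else 0) - if l = k then 1 else 0))) = 1
        rw [Finset.sum_add_distrib, hsum m, ← Finset.mul_sum]
        simp [Finset.sum_sub_distrib, hik]
      have hne := hNE m v hv0 hv1
      -- rewrite everything
      have hav : a ⬝ᵥ v = a ⬝ᵥ w m + t * (a ⬝ᵥ d) := by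
        simp only [hv]
        show a ⬝ᵥ (w m + t • d) = _
        rw [dotProduct_add, dotProduct_smul]
        simp
      have hCv : v ⬝ᵥ C *ᵥ v = w m ⬝ᵥ C *ᵥ w m + 2 * t * (d ⬝ᵥ C *ᵥ w m) + t ^ 2 * q := by
        simp only [hv]
        show (w m + t • d) ⬝ᵥ C *ᵥ (w m + t • d) = _
        rw [Matrix.mulVec_add, Matrix.mulVec_smul, add_dotProduct, smul_dotProduct,
          dotProduct_add, dotProduct_add, dotProduct_smul, dotProduct_smul,
          symdot C hCsymm (w m) d]
        simp only [smul_eq_mul, hq]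
        ring
      have hsv : ∀ j, v ⬝ᵥ w j = w m ⬝ᵥ w j + t * (d ⬝ᵥ w j) := by
        intro j
        simp only [hv]
        show (w m + t • d) ⬝ᵥ w j = _
        rw [add_dotProduct, smul_dotProduct]
        simp
      have hsum_erase : (∑ j ∈ Finset.univ.erase m, v ⬝ᵥ w j)
          = (∑ j ∈ Finset.univ.erase m, w m ⬝ᵥ w j) + t * (d ⬝ᵥ s) := by
        have : d ⬝ᵥ s = ∑ j ∈ Finset.univ.erase m, d ⬝ᵥ w j := by
          rw [hds]
          rw [show (∑ j ∈ Finset.univ.erase m, d ⬝ᵥ w j)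
              = ∑ j ∈ Finset.univ.erase m, (w j i - w j k) from
            Finset.sum_congr rfl fun j _ => hds (w j)]
          rw [Finset.sum_sub_distrib, hserase m i, hserase m k]
        rw [this, Finset.mul_sum, ← Finset.sum_add_distrib]
        exact Finset.sum_congr rfl fun j _ => hsv j
      rw [hav, hCv, hsum_erase] at hne
      nlinarith [hne]
    -- derive g ≤ 0
    have hg0 : g ≤ 0 := by
      by_contra hpos
      push_neg at hpos
      set c : ℝ := βI * q with hc
      have hc0 : 0 ≤ c := mul_nonneg hβI.le hq0
      set t : ℝ := min (w m k) (g / (c + 1)) with ht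
      have ht0 : 0 < t := lt_min (hint m k) (div_pos hpos (by linarith))
      have htk : t ≤ w m k := min_le_left _ _
      have htg : t * (c + 1) ≤ g := by
        have : t ≤ g / (c + 1) := min_le_right _ _
        exact (le_div_iff₀ (by linarith)).mp this
      have := key t ht0.le htk
      nlinarith [this, mul_le_mul_of_nonneg_left htg ht0.le, sq_nonneg t]
    -- g = F i - F k
    have hgval : g = F m i - F m k := by
      rw [hg, dotProduct_comm a d, hds a, hds s]
      rw [show d ⬝ᵥ C *ᵥ w m = (C *ᵥ w m) i - (C *ᵥ w m) k from hds _]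
      simp only [hs, hF]
      ring
    linarith [hg0, hgval.le, hgval.ge]
  -- Step 2: vector form with matrix A
  set Amat : Matrix (Fin D) (Fin D) ℝ :=
    (2 * βI) • C - βD • (1 : Matrix (Fin D) (Fin D) ℝ) with hAmat
  have i0 : Fin D := ⟨0, hD⟩
  set lam : Fin M → ℝ := fun m => F m i0 with hlam
  have hAw : ∀ m, Amat *ᵥ w m = fun i => βA * a i - βD * S i - lam m := by
    intro m
    funext i
    have h1 : F m i = lam m := le_antisymm (hgrad m i i0) (hgrad m i0 i)
    simp only [hAmat, Matrix.sub_mulVec, Matrix.smul_mulVec, Matrix.one_mulVec,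
      Pi.sub_apply, Pi.smul_apply, smul_eq_mul]
    simp only [hF] at h1
    linarith [h1]
  -- invert A
  have hAinv' : Amat⁻¹ * Amat = 1 := Matrix.nonsing_inv_mul _ hAinv
  have hwm : ∀ m, w m = Amat⁻¹ *ᵥ (fun i => βA * a i - βD * S i) - lam m • (Amat⁻¹ *ᵥ ones) := by
    intro m
    have h1 : Amat⁻¹ *ᵥ (Amat *ᵥ w m) = w m := by
      rw [Matrix.mulVec_mulVec, hAinv', Matrix.one_mulVec]
    rw [← h1, hAw m]
    have h2 : (fun i => βA * a i - βD * S i - lam m)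
        = (fun i => βA * a i - βD * S i) - lam m • ones := by
      funext i; simp [ones]
    rw [h2, Matrix.mulVec_sub, Matrix.mulVec_smul]
  -- sum-to-one yields same lambda
  have hdotw : ∀ m, ones ⬝ᵥ w m = 1 := by
    intro m
    simp only [ones, dotProduct, one_mul]
    exact hsum m
  set α : ℝ := ones ⬝ᵥ Amat⁻¹ *ᵥ ones with hαdef
  have hα' : α ≠ 0 := hα
  have hlameq : ∀ m m', lam m = lam m' := by
    have hval : ∀ m, lam m * α = ones ⬝ᵥ (Amat⁻¹ *ᵥ (fun i => βA * a i - βD * S i)) - 1 := by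
      intro m
      have := hdotw m
      rw [hwm m] at this
      rw [dotProduct_sub, dotProduct_smul] at this
      simp only [smul_eq_mul] at this
      rw [hαdef]
      linarith [this]
    intro m m'
    have := hval m
    have h2 := hval m'
    have : lam m * α = lam m' * α := by rw [hval m, hval m']
    exact mul_right_cancel₀ hα' this
  -- all strategies equal
  have hweq : ∀ m m', w m = w m' := by
    intro m m'
    rw [hwm m, hwm m', hlameq m m']
  -- fix m arbitrary
  intro m
  -- S = M • w m
  have hSw : ∀ i, S i = (M : ℝ) * w m i := by
    intro i
    rw [hS]
    simp only
    rw [show (∑ j, w j i) = ∑ _j : Fin M, w m i from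
      Finset.sum_congr rfl fun j _ => by rw [hweq j m]]
    simp [mul_comm]
  -- matrix P
  set P : Matrix (Fin D) (Fin D) ℝ :=
    (2 * βI) • C + (((M : ℝ) - 1) * βD) • (1 : Matrix (Fin D) (Fin D) ℝ) with hP
  have hM1 : (1 : ℝ) ≤ (M : ℝ) := by
    have : (2 : ℝ) ≤ (M : ℝ) := by exact_mod_cast hM
    linarith
  have hPpos : P.PosDef := by
    refine Matrix.PosDef.of_dotProduct_mulVec_pos ?_ ?_
    · show Pᴴ = P
      ext i j
      simp only [hP, Matrix.conjTranspose_apply, Matrix.add_apply, Matrix.smul_apply,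
        smul_eq_mul, star_trivial]
      have h1 : C j i = C i j := by
        have := congrFun (congrFun hCsymm i) j
        simpa [Matrix.transpose_apply] using this
      rw [h1]
      simp [Matrix.one_apply, eq_comm]
    · intro x hx
      have hx2 : (0:ℝ) < x ⬝ᵥ x := by
        rcases Function.ne_iff.mp hx with ⟨i, hi⟩
        have h1 : 0 ≤ x ⬝ᵥ x := by
          simp only [dotProduct]
          exact Finset.sum_nonneg fun l _ => mul_self_nonneg (x l)
        have h2 : x ⬝ᵥ x ≠ 0 := by
          intro h0
          exact hi (congrFun ((dotProduct_self_eq_zero).mp h0) i)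
        exact lt_of_le_of_ne h1 (Ne.symm h2)
      have hCx : 0 ≤ x ⬝ᵥ C *ᵥ x := by simpa using hC.dotProduct_mulVec_nonneg x
      have : star x = x := by simp
      rw [this, hP, Matrix.add_mulVec, Matrix.smul_mulVec, Matrix.smul_mulVec,
        Matrix.one_mulVec, dotProduct_add, dotProduct_smul, dotProduct_smul]
      simp only [smul_eq_mul]
      have h4 : (2:ℝ) ≤ (M:ℝ) := by exact_mod_cast hM
      have h3 : 0 < ((M:ℝ) - 1) * (βD * (x ⬝ᵥ x)) :=
        mul_pos (by linarith) (mul_pos hβD hx2)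
      nlinarith [mul_nonneg hβI.le hCx]
  have hPdet : IsUnit P.det := hPpos.det_pos.ne'.isUnit
  have hBP : P⁻¹ * P = 1 := Matrix.nonsing_inv_mul _ hPdet
  -- P *ᵥ w m = βA • a - lam m • ones
  have hPw : P *ᵥ w m = βA • a - lam m • ones := by
    funext i
    have h1 := congrFun (hAw m) i
    simp only [hAmat, Matrix.sub_mulVec, Matrix.smul_mulVec, Matrix.one_mulVec,
      Pi.sub_apply, Pi.smul_apply, smul_eq_mul] at h1
    simp only [hP, Matrix.add_mulVec, Matrix.smul_mulVec, Matrix.one_mulVec,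
      Pi.add_apply, Pi.smul_apply, smul_eq_mul, Pi.sub_apply, ones]
    rw [hSw i] at h1
    linear_combination h1
  have hwB : w m = B *ᵥ (βA • a - lam m • ones) := by
    have h1 : B *ᵥ (P *ᵥ w m) = w m := by
      show P⁻¹ *ᵥ (P *ᵥ w m) = w m
      rw [Matrix.mulVec_mulVec, hBP, Matrix.one_mulVec]
    rw [← h1, hPw]
  -- B is posdef, hence ones ⬝ᵥ B ones > 0
  have hBpos : (P⁻¹).PosDef := hPpos.inv
  have honesne : ones ≠ 0 := by
    intro h0
    have := congrFun h0 i0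
    simp [ones] at this
  have hoBo : 0 < ones ⬝ᵥ B *ᵥ ones := by
    have := hBpos.dotProduct_mulVec_pos honesne
    simpa using this
  -- identify lam m with lamstar
  have hlamval : lam m = lamstar := by
    have h1 := hdotw m
    rw [hwB] at h1
    rw [Matrix.mulVec_sub, Matrix.mulVec_smul, Matrix.mulVec_smul,
      dotProduct_sub, dotProduct_smul, dotProduct_smul] at h1
    simp only [smul_eq_mul] at h1
    show lam m = (βA * (ones ⬝ᵥ B *ᵥ a) - 1) / (ones ⬝ᵥ B *ᵥ ones)
    field_simp
    linarith [h1]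
  rw [hwB, hlamval]
end
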